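/- Let d ≥ 1 and f ∈ L²(ℝ^d). Define the quadratic Rihaczek distribution R(f,f)(x,ω) = e^{−2πi x·ω} f(x) conj((𝓕f)(ω)) for almost every (x,ω) ∈ ℝ^{2d}, where 𝓕 is the Fourier–Plancherel transform on L²(ℝ^d). If R(f,f) is supported on a set of finite Lebesgue measure in ℝ^{2d}, then f = 0 almost everywhere. -/

import Mathlib

open MeasureTheory
open scoped ComplexConjugate

noncomputable section RQAux

open Complex Set
open scoped ENNReal

variable {d : ℕ}

/-- The Fourier kernel `e^{-2πi t·ω}`. -/
def rqKer (d : ℕ) (t ω : Fin d → ℝ) : ℂ :=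
  Complex.exp (-2 * (Real.pi : ℂ) * Complex.I * ((∑ j, t j * ω j : ℝ) : ℂ))

lemma rqKer_eq (t ω : Fin d → ℝ) :
    rqKer d t ω = Complex.exp (((-2 * Real.pi * ∑ j, t j * ω j : ℝ) : ℂ) * Complex.I) := by
  unfold rqKer; congr 1; push_cast; ring

lemma rqKer_norm (t ω : Fin d → ℝ) : ‖rqKer d t ω‖ = 1 := by
  rw [rqKer_eq, Complex.norm_exp_ofReal_mul_I]

lemma rqKer_abs (t ω : Fin d → ℝ) : ‖rqKer d t ω‖ = 1 := by
  rw [rqKer_norm]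

lemma rqKer_mul_conj (t ω : Fin d → ℝ) :
    rqKer d t ω * (starRingEnd ℂ) (rqKer d t ω) = 1 := by
  rw [Complex.mul_conj, Complex.normSq_eq_norm_sq, rqKer_abs]
  norm_num

lemma rqKer_measurable (ω : Fin d → ℝ) : Measurable fun t => rqKer d t ω := by
  unfold rqKer
  apply Complex.measurable_exp.comp
  apply Measurable.const_mul
  exact Complex.measurable_ofReal.comp
    (Finset.measurable_sum _ fun j _ => (measurable_pi_apply j).mul_const _)

lemma rqKer_add_left (t a ω : Fin d → ℝ) :
    rqKer d (t + a) ω = rqKer d t ω * rqKer d a ω := by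
  unfold rqKer
  rw [← Complex.exp_add]
  congr 1
  have : ∑ j, (t + a) j * ω j = (∑ j, t j * ω j) + ∑ j, a j * ω j := by
    rw [← Finset.sum_add_distrib]
    exact Finset.sum_congr rfl fun j _ => by simp [add_mul]
  rw [this]
  push_cast
  ring

lemma rqKer_nsmul (j : ℕ) (a ω : Fin d → ℝ) :
    rqKer d (j • a) ω = (rqKer d a ω) ^ j := by
  unfold rqKer
  rw [← Complex.exp_nat_mul]
  congr 1
  have : ∑ i, (j • a) i * ω i = (j : ℝ) * ∑ i, a i * ω i := by
    rw [Finset.mul_sum]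
    exact Finset.sum_congr rfl fun i _ => by simp [mul_assoc]
  rw [this]
  push_cast
  ring

/-- An `L²` function supported on a finite-measure set is integrable. -/
lemma rq_supp_integrable {g : (Fin d → ℝ) → ℂ} (hg : MemLp g 2 volume)
    {A : Set (Fin d → ℝ)} (hA : MeasurableSet A) (hAfin : volume A ≠ ⊤)
    (hs : ∀ᵐ x ∂volume, x ∉ A → g x = 0) : Integrable g volume := by
  have h1 : g =ᵐ[volume] A.indicator g := by
    filter_upwards [hs] with x hx
    by_cases hxA : x ∈ A
    · simp [Set.indicator_of_mem hxA]
    · simp [Set.indicator_of_notMem hxA, hx hxA]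
  haveI : IsFiniteMeasure (volume.restrict A) :=
    ⟨by rw [Measure.restrict_apply_univ]; exact lt_top_iff_ne_top.mpr hAfin⟩
  have h2 : IntegrableOn g A volume := by
    rw [IntegrableOn, ← memLp_one_iff_integrable]
    exact (hg.restrict A).mono_exponent (by norm_num)
  exact (h2.integrable_indicator hA).congr h1.symm

/-- The abstract hypothesis on the unitary `𝓕`. -/
def RQHyp (d : ℕ)
    (𝓕 : Lp ℂ 2 (volume : Measure (Fin d → ℝ)) ≃ₗᵢ[ℂ]
      Lp ℂ 2 (volume : Measure (Fin d → ℝ))) : Prop :=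
  ∀ (φ : (Fin d → ℝ) → ℂ), Integrable φ volume → ∀ (hφ2 : MemLp φ 2 volume),
    ⇑(𝓕 (hφ2.toLp φ)) =ᵐ[volume] fun ω : Fin d → ℝ => ∫ t : Fin d → ℝ, φ t * rqKer d t ω

variable {𝓕 : Lp ℂ 2 (volume : Measure (Fin d → ℝ)) ≃ₗᵢ[ℂ]
      Lp ℂ 2 (volume : Measure (Fin d → ℝ))}

lemma rq_fourier_coe (h𝓕 : RQHyp d 𝓕) (g : Lp ℂ 2 (volume : Measure (Fin d → ℝ)))
    (hInt : Integrable (⇑g) volume) :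
    ⇑(𝓕 g) =ᵐ[volume] fun ω => ∫ t, g t * rqKer d t ω := by
  have h := h𝓕 (⇑g) hInt (Lp.memLp g)
  rwa [Lp.toLp_coeFn] at h

lemma rq_int_norm_sq (F : Lp ℂ 2 (volume : Measure (Fin d → ℝ))) :
    ∫ ω, ‖F ω‖ ^ 2 ∂volume = ‖F‖ ^ 2 := by
  rw [← @inner_self_eq_norm_sq ℂ, MeasureTheory.L2.inner_def,
    ← integral_re (L2.integrable_inner F F)]
  exact integral_congr_ae (Filter.Eventually.of_forall fun ω =>
    (@inner_self_eq_norm_sq ℂ _ _ _ _ (F ω)).symm)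

/-- Dimension bound: an orthonormal family supported on `A` whose Fourier transforms are
supported on `B` has at most `|A|·|B|` elements. -/
lemma rq_step1 (h𝓕 : RQHyp d 𝓕) {A B : Set (Fin d → ℝ)}
    (hA : MeasurableSet A) (hB : MeasurableSet B)
    (hAfin : volume A ≠ ⊤) (hBfin : volume B ≠ ⊤) {N : ℕ}
    {v : Fin N → Lp ℂ 2 (volume : Measure (Fin d → ℝ))} (hv : Orthonormal ℂ v)
    (hsA : ∀ i, ∀ᵐ x ∂volume, x ∉ A → v i x = 0)
    (hsB : ∀ i, ∀ᵐ ω ∂volume, ω ∉ B → 𝓕 (v i) ω = 0) :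
    (N : ℝ) ≤ (volume A).toReal * (volume B).toReal := by
  classical
  have hInt : ∀ i, Integrable (⇑(v i)) volume := fun i =>
    rq_supp_integrable (Lp.memLp _) hA hAfin (hsA i)
  set uf : (Fin d → ℝ) → (Fin d → ℝ) → ℂ :=
    fun ω => A.indicator (fun t => (starRingEnd ℂ) (rqKer d t ω)) with huf
  have hufm : ∀ ω, MemLp (uf ω) 2 volume := by
    intro ω
    constructor
    · exact (((continuous_star.measurable.comp (rqKer_measurable ω))).indicator hA).aestronglyMeasurable
    · calc eLpNorm (uf ω) 2 volume ≤ eLpNorm (A.indicator fun _ => (1:ℝ)) 2 volume := by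
            apply eLpNorm_mono
            intro x
            by_cases hx : x ∈ A
            · simp [huf, Set.indicator_of_mem hx, rqKer_abs]
            · simp [huf, Set.indicator_of_notMem hx]
        _ < ⊤ := by
            rw [eLpNorm_indicator_const hA (by norm_num) (by norm_num)]
            exact ENNReal.mul_lt_top (by simp)
              (ENNReal.rpow_lt_top_of_nonneg (by norm_num) hAfin)
  set u : (Fin d → ℝ) → Lp ℂ 2 (volume : Measure (Fin d → ℝ)) :=
    fun ω => (hufm ω).toLp (uf ω) with hu
  have hinner : ∀ (i : Fin N) (ω : Fin d → ℝ),
      @inner ℂ _ _ (u ω) (v i) = ∫ t, v i t * rqKer d t ω := by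
    intro i ω
    rw [MeasureTheory.L2.inner_def]
    have h1 : (fun t => @inner ℂ _ _ ((u ω) t) (v i t)) =ᵐ[volume]
        fun t => A.indicator (fun t' => rqKer d t' ω * v i t') t := by
      filter_upwards [MemLp.coeFn_toLp (hufm ω)] with t ht
      rw [show (u ω) t = uf ω t from ht]
      simp only [RCLike.inner_apply]
      by_cases hx : t ∈ A
      · simp [huf, Set.indicator_of_mem hx]; ring
      · simp [huf, Set.indicator_of_notMem hx]
    rw [integral_congr_ae h1, integral_indicator hA]
    have h2 : (fun t => v i t * rqKer d t ω) =ᵐ[volume]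
        A.indicator (fun t => rqKer d t ω * v i t) := by
      filter_upwards [hsA i] with t ht
      by_cases hx : t ∈ A
      · simp [Set.indicator_of_mem hx, mul_comm]
      · simp [Set.indicator_of_notMem hx, ht hx]
    rw [integral_congr_ae h2, integral_indicator hA]
  have hu_norm : ∀ ω, ‖u ω‖ ^ 2 = (volume A).toReal := by
    intro ω
    rw [← @inner_self_eq_norm_sq ℂ, MeasureTheory.L2.inner_def]
    have h1 : (fun t => @inner ℂ _ _ ((u ω) t) ((u ω) t)) =ᵐ[volume]
        fun t => A.indicator (fun _ => (1:ℂ)) t := by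
      filter_upwards [MemLp.coeFn_toLp (hufm ω)] with t ht
      rw [show (u ω) t = uf ω t from ht]
      simp only [RCLike.inner_apply]
      by_cases hx : t ∈ A
      · simp only [huf, Set.indicator_of_mem hx, Complex.conj_conj]
        exact (mul_comm _ _).trans (rqKer_mul_conj t ω)
      · simp [huf, Set.indicator_of_notMem hx]
    rw [integral_congr_ae h1, integral_indicator_const (1:ℂ) hA]
    simp; rfl
  have hb : ∀ ω, (∑ i : Fin N, ‖@inner ℂ _ _ (u ω) (v i)‖ ^ 2) ≤ (volume A).toReal := by
    intro ω
    have h1 := hv.sum_inner_products_le (u ω) (s := Finset.univ)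
    have h2 : ∑ i : Fin N, ‖@inner ℂ _ _ (u ω) (v i)‖ ^ 2
        = ∑ i ∈ Finset.univ, ‖@inner ℂ _ _ (v i) (u ω)‖ ^ 2 :=
      Finset.sum_congr rfl fun i _ => by rw [norm_inner_symm]
    rw [h2]
    exact h1.trans_eq (hu_norm ω)
  have hF : ∀ i, ⇑(𝓕 (v i)) =ᵐ[volume] fun ω => @inner ℂ _ _ (u ω) (v i) := fun i =>
    (rq_fourier_coe h𝓕 (v i) (hInt i)).trans
      (Filter.Eventually.of_forall fun ω => (hinner i ω).symm)
  have hae : ∀ᵐ ω ∂volume, (∑ i : Fin N, ‖(𝓕 (v i)) ω‖ ^ 2)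
      ≤ B.indicator (fun _ => (volume A).toReal) ω := by
    have h1 : ∀ᵐ ω ∂volume, ∀ i, (𝓕 (v i)) ω = @inner ℂ _ _ (u ω) (v i) := ae_all_iff.mpr hF
    have h2 : ∀ᵐ ω ∂volume, ∀ i, ω ∉ B → (𝓕 (v i)) ω = 0 := ae_all_iff.mpr hsB
    filter_upwards [h1, h2] with ω hω1 hω2
    by_cases hωB : ω ∈ B
    · rw [Set.indicator_of_mem hωB]
      refine le_trans (le_of_eq ?_) (hb ω)
      exact Finset.sum_congr rfl fun i _ => by rw [hω1 i]
    · rw [Set.indicator_of_notMem hωB]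
      have h3 : ∀ i : Fin N, ‖(𝓕 (v i)) ω‖ ^ 2 = 0 := fun i => by rw [hω2 i hωB]; simp
      rw [Finset.sum_congr rfl fun i _ => h3 i]; simp
  have hFint : ∀ i, Integrable (fun ω => ‖(𝓕 (v i)) ω‖ ^ 2) volume := by
    intro i
    have h1 := (Lp.memLp (𝓕 (v i))).norm_rpow (by norm_num) (by norm_num)
    rw [memLp_one_iff_integrable] at h1
    refine h1.congr (Filter.Eventually.of_forall fun ω => ?_)
    norm_num [Real.rpow_two]
  have hIint : Integrable (B.indicator fun _ => (volume A).toReal) volume :=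
    (integrableOn_const hBfin).integrable_indicator hB
  have hsum : ∫ ω, (∑ i : Fin N, ‖(𝓕 (v i)) ω‖ ^ 2) ∂volume = (N:ℝ) := by
    rw [integral_finset_sum _ fun i _ => hFint i]
    have h1 : ∀ i : Fin N, ∫ ω, ‖(𝓕 (v i)) ω‖ ^ 2 ∂volume = 1 := by
      intro i
      rw [rq_int_norm_sq, LinearIsometryEquiv.norm_map, hv.1 i]
      norm_num
    rw [Finset.sum_congr rfl fun i _ => h1 i]
    simp
  calc (N : ℝ) = ∫ ω, (∑ i : Fin N, ‖(𝓕 (v i)) ω‖ ^ 2) ∂volume := hsum.symm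
    _ ≤ ∫ ω, B.indicator (fun _ => (volume A).toReal) ω ∂volume :=
        integral_mono_ae (integrable_finset_sum _ fun i _ => hFint i) hIint hae
    _ = (volume B).toReal • (volume A).toReal := integral_indicator_const _ hB
    _ = _ := by rw [smul_eq_mul, mul_comm]

/-- A hyperplane is null. -/
lemma rq_hyperplane_null {a : Fin d → ℝ} (ha : a ≠ 0) (c : ℝ) :
    volume {ω : Fin d → ℝ | ∑ j, a j * ω j = c} = 0 := by
  obtain ⟨j₀, hj₀⟩ : ∃ j, a j ≠ 0 := by
    by_contra h; push_neg at h; exact ha (funext h)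
  set φ : (Fin d → ℝ) →ₗ[ℝ] ℝ :=
    { toFun := fun ω => ∑ j, a j * ω j
      map_add' := by intro x y; simp [mul_add, Finset.sum_add_distrib]
      map_smul' := by
        intro m x
        simp only [Pi.smul_apply, smul_eq_mul, RingHom.id_apply, Finset.mul_sum]
        exact Finset.sum_congr rfl fun j _ => by ring } with hφ
  have hφsingle : ∀ (r : ℝ) (j : Fin d), φ (r • (Pi.single j (1:ℝ) : Fin d → ℝ)) = r * a j := by
    intro r j
    simp only [hφ, LinearMap.coe_mk, AddHom.coe_mk, Pi.smul_apply, Pi.single_apply,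
      smul_eq_mul, mul_ite, mul_one, mul_zero, Finset.sum_ite_eq', Finset.mem_univ, if_true]
    ring
  set x₀ : Fin d → ℝ := (c / a j₀) • (Pi.single j₀ (1:ℝ) : Fin d → ℝ) with hx₀def
  have hx₀ : φ x₀ = c := by
    rw [hx₀def, hφsingle]
    field_simp
  have hset : {ω : Fin d → ℝ | ∑ j, a j * ω j = c}
      = (fun ω => ω - x₀) ⁻¹' (LinearMap.ker φ : Set (Fin d → ℝ)) := by
    ext ω
    simp only [Set.mem_setOf_eq, Set.mem_preimage, SetLike.mem_coe, LinearMap.mem_ker,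
      map_sub, hx₀, sub_eq_zero]
    exact Iff.rfl
  rw [hset]
  have hmp : MeasurePreserving (fun ω : Fin d → ℝ => ω - x₀) volume volume := by
    simpa [sub_eq_add_neg] using measurePreserving_add_right
      (volume : Measure (Fin d → ℝ)) (-x₀)
  rw [hmp.measure_preimage ((Submodule.closed_of_finiteDimensional
    (LinearMap.ker φ)).measurableSet.nullMeasurableSet)]
  apply Measure.addHaar_submodule
  intro h
  have h1 : φ ((1:ℝ) • (Pi.single j₀ (1:ℝ) : Fin d → ℝ)) = 0 := by
    have : ((1:ℝ) • (Pi.single j₀ (1:ℝ) : Fin d → ℝ)) ∈ LinearMap.ker φ := by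
      rw [h]; trivial
    simpa using this
  rw [hφsingle] at h1
  simp at h1
  exact hj₀ h1

/-- A level set of `ω ↦ e^{-2πi a·ω}` is null for `a ≠ 0`. -/
lemma rq_level_null {a : Fin d → ℝ} (ha : a ≠ 0) (z : ℂ) :
    volume {ω : Fin d → ℝ | rqKer d a ω = z} = 0 := by
  rcases Set.eq_empty_or_nonempty {ω : Fin d → ℝ | rqKer d a ω = z} with h | ⟨ω₀, hω₀⟩
  · simp [h]
  · set s : (Fin d → ℝ) → ℝ := fun ω => ∑ j, a j * ω j with hs
    have key : {ω : Fin d → ℝ | rqKer d a ω = z}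
        ⊆ ⋃ n : ℤ, {ω : Fin d → ℝ | ∑ j, a j * ω j = s ω₀ + (n : ℝ)} := by
      intro ω hω
      have heq : rqKer d a ω = rqKer d a ω₀ := hω.trans hω₀.symm
      have h1 : Complex.exp ((-2 * (Real.pi:ℂ) * Complex.I * ((s ω : ℝ) : ℂ))
          - (-2 * (Real.pi:ℂ) * Complex.I * ((s ω₀ : ℝ) : ℂ))) = 1 := by
        rw [Complex.exp_sub]
        rw [div_eq_one_iff_eq (Complex.exp_ne_zero _)]
        exact heq
      rw [Complex.exp_eq_one_iff] at h1
      obtain ⟨n, hn⟩ := h1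
      refine Set.mem_iUnion.mpr ⟨-n, ?_⟩
      have hne : (2 * (Real.pi:ℂ) * Complex.I) ≠ 0 := by
        simp [Real.pi_ne_zero, Complex.I_ne_zero]
      have h3 : (2 * (Real.pi:ℂ) * Complex.I) * (((s ω : ℝ) : ℂ) - ((s ω₀ : ℝ) : ℂ))
          = (2 * (Real.pi:ℂ) * Complex.I) * ((-n : ℤ) : ℂ) := by
        push_cast
        linear_combination -hn
      have h4 := mul_left_cancel₀ hne h3
      have h5 : s ω - s ω₀ = ((-n : ℤ) : ℝ) := by exact_mod_cast h4
      have h6 : s ω = s ω₀ + ((-n : ℤ) : ℝ) := by linarith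
      exact h6
    exact measure_mono_null key (measure_iUnion_null fun n => rq_hyperplane_null ha _)

/-- Small translations move a finite-measure set only slightly. -/
lemma rq_translations_small {A : Set (Fin d → ℝ)} (hA : MeasurableSet A) (hAfin : volume A ≠ ⊤)
    {ε : ℝ≥0∞} (hε : ε ≠ 0) :
    ∃ δ : ℝ, 0 < δ ∧ ∀ v : Fin d → ℝ, ‖v‖ < δ →
      volume ({x | x - v ∈ A} \ A) ≤ ε := by
  obtain ⟨K, hKA, hK, hKm⟩ := hA.exists_isCompact_diff_lt hAfin (ENNReal.half_pos hε).ne'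
  obtain ⟨U, hAU, hU, hUfin, hUm⟩ := hA.exists_isOpen_diff_lt hAfin (ENNReal.half_pos hε).ne'
  obtain ⟨δ, hδ, hthick⟩ := hK.exists_thickening_subset_open hU (hKA.trans hAU)
  refine ⟨δ, hδ, fun v hv => ?_⟩
  have hsub : {x | x - v ∈ A} \ A ⊆ ((fun x => x - v) ⁻¹' (A \ K)) ∪ (U \ A) := by
    rintro x ⟨hx1, hx2⟩
    by_cases hxK : x - v ∈ K
    · right
      refine ⟨hthick (Metric.mem_thickening_iff.mpr ⟨x - v, hxK, ?_⟩), hx2⟩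
      rw [dist_eq_norm]
      simpa using hv
    · left; exact ⟨hx1, hxK⟩
  have hmp : MeasurePreserving (fun x : Fin d → ℝ => x - v) volume volume := by
    simpa [sub_eq_add_neg] using measurePreserving_add_right
      (volume : Measure (Fin d → ℝ)) (-v)
  have h1 : volume ((fun x : Fin d → ℝ => x - v) ⁻¹' (A \ K)) = volume (A \ K) :=
    hmp.measure_preimage ((hA.diff hK.measurableSet).nullMeasurableSet)
  calc volume ({x | x - v ∈ A} \ A)
      ≤ volume ((fun x : Fin d → ℝ => x - v) ⁻¹' (A \ K)) + volume (U \ A) :=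
        (measure_mono hsub).trans (measure_union_le _ _)
    _ ≤ ε / 2 + ε / 2 := add_le_add (by rw [h1]; exact hKm.le) hUm.le
    _ = ε := ENNReal.add_halves ε

/-- Coercion of a finite sum in `Lp`. -/
lemma rq_coeFn_sum {ι : Type*} (s : Finset ι)
    (F : ι → Lp ℂ 2 (volume : Measure (Fin d → ℝ))) :
    ⇑(∑ i ∈ s, F i) =ᵐ[volume] fun x => ∑ i ∈ s, F i x := by
  classical
  induction s using Finset.induction_on with
  | empty => simp only [Finset.sum_empty]; exact Lp.coeFn_zero (E := ℂ) (p := 2) (μ := (volume : Measure (Fin d → ℝ)))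
  | insert a s' h ih =>
    rw [Finset.sum_insert h]
    filter_upwards [Lp.coeFn_add (F a) (∑ i ∈ s', F i), ih] with x h1 h2
    simp only [Finset.sum_insert h]
    rw [h1]
    simp only [Pi.add_apply, h2]

set_option maxHeartbeats 2000000 in
/-- Amrein–Berthier / Benedicks: no nonzero `L²` function has support and Fourier support
both of finite measure. -/
lemma rq_AB (hd : 1 ≤ d) (h𝓕 : RQHyp d 𝓕)
    {g : Lp ℂ 2 (volume : Measure (Fin d → ℝ))} (hg : g ≠ 0)
    {A B : Set (Fin d → ℝ)} (hA : MeasurableSet A) (hB : MeasurableSet B)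
    (hAfin : volume A ≠ ⊤) (hBfin : volume B ≠ ⊤)
    (hsA : ∀ᵐ x ∂volume, x ∉ A → g x = 0)
    (hsB : ∀ᵐ ω ∂volume, ω ∉ B → 𝓕 g ω = 0) : False := by
  classical
  have hgInt : Integrable (⇑g) volume := rq_supp_integrable (Lp.memLp g) hA hAfin hsA
  obtain ⟨n, hn⟩ := exists_nat_gt (((volume A).toReal + 1) * (volume B).toReal)
  have hε : ((n:ℝ≥0∞) + 1)⁻¹ ≠ 0 :=
    ENNReal.inv_ne_zero.mpr (ENNReal.add_ne_top.mpr ⟨ENNReal.natCast_ne_top n, ENNReal.one_ne_top⟩)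
  obtain ⟨δ, hδ, hδp⟩ := rq_translations_small hA hAfin hε
  set e : Fin d → ℝ := (Pi.single (⟨0, hd⟩ : Fin d) (1:ℝ) : Fin d → ℝ) with he
  set c : ℝ := δ / ((n + 1) * (‖e‖ + 1)) with hcdef
  have hcpos : 0 < c := by
    apply div_pos hδ
    positivity
  set a : Fin d → ℝ := c • e with ha
  have hane : a ≠ 0 := by
    intro h
    have h2 : a ⟨0, hd⟩ = 0 := by rw [h]; rfl
    rw [ha] at h2
    simp only [Pi.smul_apply, he, Pi.single_eq_same, smul_eq_mul, mul_one] at h2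
    exact hcpos.ne' h2
  have hnorm_a : ‖a‖ = c * ‖e‖ := by
    rw [ha, norm_smul, Real.norm_eq_abs, abs_of_pos hcpos]
  have hja : ∀ j : Fin (n+1), ‖((j:ℕ) • a : Fin d → ℝ)‖ < δ := by
    intro j
    have h1 : ((j:ℕ) • a : Fin d → ℝ) = ((j:ℕ):ℝ) • a := (Nat.cast_smul_eq_nsmul ℝ _ _).symm
    rw [h1, norm_smul, Real.norm_eq_abs, _root_.abs_of_nonneg (by positivity : (0:ℝ) ≤ ((j:ℕ):ℝ)), hnorm_a]
    have hj : ((j:ℕ):ℝ) ≤ n := by exact_mod_cast Nat.lt_succ_iff.mp j.isLt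
    have hkey : c * ((n + 1) * (‖e‖ + 1)) = δ := by
      rw [hcdef]; field_simp
    have h2 : ((j:ℕ):ℝ) * (c * ‖e‖) ≤ (n:ℝ) * (c * (‖e‖+1)) := by
      apply mul_le_mul hj ?_ ?_ ?_
      · nlinarith [hcpos]
      · positivity
      · positivity
    have h3 : (n:ℝ) * (c * (‖e‖+1)) < ((n:ℝ)+1) * (c * (‖e‖+1)) := by
      apply mul_lt_mul_of_pos_right (by linarith) (by positivity)
    have h4 : ((n:ℝ)+1) * (c * (‖e‖+1)) = δ := by rw [← hkey]; ring
    linarith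
  have hmpj : ∀ j : ℕ, MeasurePreserving
      (fun x : Fin d → ℝ => x - j • a) volume volume := by
    intro j
    simpa [sub_eq_add_neg] using measurePreserving_add_right
      (volume : Measure (Fin d → ℝ)) (-(j • a))
  set A' : Set (Fin d → ℝ) := ⋃ j : Fin (n+1), {x | x - (j:ℕ) • a ∈ A} with hA'
  have hA'm : MeasurableSet A' :=
    MeasurableSet.iUnion fun j => hA.preimage (hmpj _).measurable
  have hA'le : volume A' ≤ volume A + 1 := by
    have h1 : A' ⊆ A ∪ ⋃ j : Fin (n+1), ({x | x - (j:ℕ) • a ∈ A} \ A) := by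
      intro x hx
      rcases Set.mem_iUnion.mp hx with ⟨j, hj⟩
      by_cases hxA : x ∈ A
      · exact Or.inl hxA
      · exact Or.inr (Set.mem_iUnion.mpr ⟨j, hj, hxA⟩)
    calc volume A' ≤ volume A + volume (⋃ j : Fin (n+1), ({x | x - (j:ℕ) • a ∈ A} \ A)) :=
          (measure_mono h1).trans (measure_union_le _ _)
      _ ≤ volume A + ∑ j : Fin (n+1), volume ({x | x - (j:ℕ) • a ∈ A} \ A) := by
          gcongr
          exact measure_iUnion_fintype_le _ _
      _ ≤ volume A + ∑ _j : Fin (n+1), ((n:ℝ≥0∞) + 1)⁻¹ := by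
          gcongr with j
          exact hδp _ (hja j)
      _ ≤ volume A + 1 := by
          gcongr
          rw [Finset.sum_const]
          simp only [Finset.card_univ, Fintype.card_fin, nsmul_eq_mul]
          rw [show ((n+1 : ℕ) : ℝ≥0∞) = (n : ℝ≥0∞) + 1 by push_cast; ring]
          exact le_of_eq (ENNReal.mul_inv_cancel
            (by simp)
            (ENNReal.add_ne_top.mpr ⟨ENNReal.natCast_ne_top n, ENNReal.one_ne_top⟩))
  have hA'fin : volume A' ≠ ⊤ :=
    ne_top_of_le_ne_top (ENNReal.add_ne_top.mpr ⟨hAfin, ENNReal.one_ne_top⟩) hA'le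
  have hτmem : ∀ j : ℕ, MemLp (fun x : Fin d → ℝ => g (x - j • a)) 2 volume := fun j =>
    (Lp.memLp g).comp_measurePreserving (hmpj j)
  have hτint : ∀ j : ℕ, Integrable (fun x : Fin d → ℝ => g (x - j • a)) volume := by
    intro j
    rw [← memLp_one_iff_integrable] at hgInt ⊢
    exact hgInt.comp_measurePreserving (hmpj j)
  set G : Fin (n+1) → Lp ℂ 2 (volume : Measure (Fin d → ℝ)) :=
    fun j => (hτmem (j:ℕ)).toLp _ with hG
  have hGcoe : ∀ j : Fin (n+1), ⇑(G j) =ᵐ[volume] fun x => g (x - (j:ℕ) • a) :=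
    fun j => MemLp.coeFn_toLp _
  have hFg := rq_fourier_coe h𝓕 g hgInt
  have hGf : ∀ j : Fin (n+1),
      ⇑(𝓕 (G j)) =ᵐ[volume] fun ω => rqKer d ((j:ℕ) • a) ω * (𝓕 g) ω := by
    intro j
    have h1 : ⇑(𝓕 (G j)) =ᵐ[volume]
        fun ω => ∫ t, g (t - (j:ℕ) • a) * rqKer d t ω :=
      h𝓕 _ (hτint (j:ℕ)) (hτmem (j:ℕ))
    have h2 : ∀ ω, (∫ t, g (t - (j:ℕ) • a) * rqKer d t ω)
        = rqKer d ((j:ℕ) • a) ω * ∫ t, g t * rqKer d t ω := by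
      intro ω
      have h3 := integral_add_right_eq_self (μ := (volume : Measure (Fin d → ℝ)))
        (fun t => g (t - (j:ℕ) • a) * rqKer d t ω) ((j:ℕ) • a)
      rw [← h3]
      have h4 : ∀ t : Fin d → ℝ, g (t + (j:ℕ) • a - (j:ℕ) • a) * rqKer d (t + (j:ℕ) • a) ω
          = (g t * rqKer d t ω) * rqKer d ((j:ℕ) • a) ω := by
        intro t
        rw [add_sub_cancel_right, rqKer_add_left]
        ring
      calc (∫ t, g (t + (j:ℕ) • a - (j:ℕ) • a) * rqKer d (t + (j:ℕ) • a) ω)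
          = ∫ t, (g t * rqKer d t ω) * rqKer d ((j:ℕ) • a) ω :=
            integral_congr_ae (Filter.Eventually.of_forall fun t => h4 t)
        _ = (∫ t, g t * rqKer d t ω) * rqKer d ((j:ℕ) • a) ω := integral_mul_const _ _
        _ = rqKer d ((j:ℕ) • a) ω * ∫ t, g t * rqKer d t ω := mul_comm _ _
    filter_upwards [h1, hFg] with ω hω1 hω2
    rw [hω1, h2 ω, hω2]
  have hGsA : ∀ j : Fin (n+1), ∀ᵐ x ∂volume, x ∉ A' → (G j) x = 0 := by
    intro j
    have hbad : volume {t : Fin d → ℝ | ¬ (t ∉ A → g t = 0)} = 0 := ae_iff.mp hsA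
    have hpre := (hmpj (j:ℕ)).quasiMeasurePreserving.preimage_null hbad
    have h5 : ∀ᵐ x ∂volume, x - (j:ℕ) • a ∉ A → g (x - (j:ℕ) • a) = 0 := by
      rw [ae_iff]
      exact hpre
    filter_upwards [h5, hGcoe j] with x hx hcoe hxA'
    rw [hcoe]
    exact hx fun hmem => hxA' (Set.mem_iUnion.mpr ⟨j, hmem⟩)
  have hGsB : ∀ j : Fin (n+1), ∀ᵐ ω ∂volume, ω ∉ B → (𝓕 (G j)) ω = 0 := by
    intro j
    filter_upwards [hGf j, hsB] with ω h1 h2 hωB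
    rw [h1, h2 hωB, mul_zero]
  have hFg_ne : ¬ (⇑(𝓕 g) =ᵐ[volume] 0) := by
    intro h
    apply hg
    have h0 : 𝓕 g = 0 := (Lp.eq_zero_iff_ae_eq_zero).mpr h
    exact (LinearIsometryEquiv.map_eq_zero_iff 𝓕).mp h0
  have hGli : LinearIndependent ℂ G := by
    rw [Fintype.linearIndependent_iff]
    intro cc hcc
    by_contra hcne
    push_neg at hcne
    obtain ⟨j₀, hj₀⟩ := hcne
    set P : Polynomial ℂ := ∑ j : Fin (n+1), Polynomial.C (cc j) * Polynomial.X ^ (j:ℕ) with hP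
    have hco : P.coeff (j₀:ℕ) = cc j₀ := by
      rw [hP, Polynomial.finset_sum_coeff]
      have h1 : ∀ j : Fin (n+1), (Polynomial.C (cc j) * Polynomial.X ^ (j:ℕ)).coeff (j₀:ℕ)
          = if j₀ = j then cc j else 0 := by
        intro j
        rw [Polynomial.coeff_C_mul, Polynomial.coeff_X_pow]
        by_cases h : j₀ = j
        · simp [h]
        · have h2 : (j₀:ℕ) ≠ (j:ℕ) := fun hh => h (Fin.val_injective hh)
          simp [h, h2]
      rw [Finset.sum_congr rfl fun j _ => h1 j]
      simp
    have hPne : P ≠ 0 := fun h => hj₀ (by rw [← hco, h, Polynomial.coeff_zero])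
    have hroot_null : volume {ω : Fin d → ℝ | Polynomial.eval (rqKer d a ω) P = 0} = 0 := by
      have hsub : {ω : Fin d → ℝ | Polynomial.eval (rqKer d a ω) P = 0}
          ⊆ ⋃ r ∈ (↑P.roots.toFinset : Set ℂ), {ω : Fin d → ℝ | rqKer d a ω = r} := by
        intro ω hω
        have hmem : rqKer d a ω ∈ P.roots := by
          rw [Polynomial.mem_roots hPne]
          exact hω
        exact Set.mem_biUnion (Finset.mem_coe.mpr (Multiset.mem_toFinset.mpr hmem)) rfl
      refine measure_mono_null hsub ?_
      exact (measure_biUnion_null_iff (P.roots.toFinset.countable_toSet)).mpr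
        fun r _ => rq_level_null hane r
    have h6 : (∑ j : Fin (n+1), cc j • 𝓕 (G j)) = 0 := by
      have h7 : 𝓕 (∑ j : Fin (n+1), cc j • G j) = ∑ j : Fin (n+1), cc j • 𝓕 (G j) := by
        rw [map_sum]
        exact Finset.sum_congr rfl fun j _ => by rw [LinearIsometryEquiv.map_smul]
      rw [← h7, hcc, map_zero]
    have key : ∀ᵐ ω ∂volume, Polynomial.eval (rqKer d a ω) P * (𝓕 g) ω = 0 := by
      have h8 := rq_coeFn_sum (d := d) Finset.univ (fun j => cc j • 𝓕 (G j))
      have h9 : ∀ᵐ ω ∂volume, ∀ j : Fin (n+1), (cc j • 𝓕 (G j)) ω = cc j * (𝓕 (G j)) ω :=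
        ae_all_iff.mpr fun j => by
          filter_upwards [Lp.coeFn_smul (cc j) (𝓕 (G j))] with ω hω
          rw [hω]
          rfl
      have h10 : ∀ᵐ ω ∂volume, ∀ j : Fin (n+1),
          (𝓕 (G j)) ω = rqKer d ((j:ℕ) • a) ω * (𝓕 g) ω := ae_all_iff.mpr hGf
      have h11 : ⇑(∑ j : Fin (n+1), cc j • 𝓕 (G j)) =ᵐ[volume] 0 := by
        rw [h6]
        exact Lp.coeFn_zero ℂ 2 (volume : Measure (Fin d → ℝ))
      filter_upwards [h8, h9, h10, h11] with ω h8' h9' h10' h11'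
      have h12 : ∑ j : Fin (n+1), cc j * (rqKer d ((j:ℕ) • a) ω * (𝓕 g) ω) = 0 := by
        calc ∑ j : Fin (n+1), cc j * (rqKer d ((j:ℕ) • a) ω * (𝓕 g) ω)
            = ∑ j : Fin (n+1), (cc j • 𝓕 (G j)) ω :=
              Finset.sum_congr rfl fun j _ => by rw [h9' j, h10' j]
          _ = (∑ j : Fin (n+1), cc j • 𝓕 (G j)) ω := h8'.symm
          _ = 0 := by simpa using h11'
      have h13 : Polynomial.eval (rqKer d a ω) P
          = ∑ j : Fin (n+1), cc j * (rqKer d a ω) ^ (j:ℕ) := by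
        rw [hP, Polynomial.eval_finset_sum]
        exact Finset.sum_congr rfl fun j _ => by
          rw [Polynomial.eval_mul, Polynomial.eval_C, Polynomial.eval_pow, Polynomial.eval_X]
      rw [h13, Finset.sum_mul, ← h12]
      exact Finset.sum_congr rfl fun j _ => by rw [rqKer_nsmul]; ring
    have hnz : ∀ᵐ ω ∂volume, Polynomial.eval (rqKer d a ω) P ≠ 0 := by
      rw [ae_iff]
      have hset : {ω : Fin d → ℝ | ¬ Polynomial.eval (rqKer d a ω) P ≠ 0}
          = {ω : Fin d → ℝ | Polynomial.eval (rqKer d a ω) P = 0} := by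
        ext ω; simp
      rw [hset]
      exact hroot_null
    apply hFg_ne
    filter_upwards [key, hnz] with ω h1 h2
    rcases mul_eq_zero.mp h1 with h | h
    · exact absurd h h2
    · simpa using h
  set W : Submodule ℂ (Lp ℂ 2 (volume : Measure (Fin d → ℝ))) :=
    Submodule.span ℂ (Set.range G) with hW
  haveI hWfd : FiniteDimensional ℂ W := FiniteDimensional.span_of_finite ℂ (Set.finite_range G)
  have hrank : Module.finrank ℂ W = n + 1 := by
    rw [hW, finrank_span_eq_card hGli]
    simp
  set ob := stdOrthonormalBasis ℂ W with hob
  set vv : Fin (Module.finrank ℂ W) → Lp ℂ 2 (volume : Measure (Fin d → ℝ)) :=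
    fun i => ((ob i : W) : Lp ℂ 2 (volume : Measure (Fin d → ℝ))) with hvv
  have hvon : Orthonormal ℂ vv := by
    rw [orthonormal_iff_ite]
    intro i j
    have h1 := ob.orthonormal
    rw [orthonormal_iff_ite] at h1
    rw [hvv]
    simp only
    rw [← Submodule.coe_inner]
    exact h1 i j
  have hWsupp : ∀ h ∈ W, (∀ᵐ x ∂volume, x ∉ A' → h x = 0)
      ∧ (∀ᵐ ω ∂volume, ω ∉ B → (𝓕 h) ω = 0) := by
    intro h hh
    refine Submodule.span_induction ?_ ?_ ?_ ?_ hh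
    · rintro x ⟨j, rfl⟩
      exact ⟨hGsA j, hGsB j⟩
    · constructor
      · filter_upwards [Lp.coeFn_zero ℂ 2 (volume : Measure (Fin d → ℝ))]
          with x hx _
        simpa using hx
      · rw [map_zero]
        filter_upwards [Lp.coeFn_zero ℂ 2 (volume : Measure (Fin d → ℝ))]
          with ω hω _
        simpa using hω
    · rintro x y _ _ ⟨hx1, hx2⟩ ⟨hy1, hy2⟩
      constructor
      · filter_upwards [Lp.coeFn_add x y, hx1, hy1] with t ht htx hty htA
        rw [ht]
        simp [htx htA, hty htA]
      · rw [map_add]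
        filter_upwards [Lp.coeFn_add (𝓕 x) (𝓕 y), hx2, hy2] with ω hω hωx hωy hωB
        rw [hω]
        simp [hωx hωB, hωy hωB]
    · rintro r x _ ⟨hx1, hx2⟩
      constructor
      · filter_upwards [Lp.coeFn_smul r x, hx1] with t ht htx htA
        rw [ht]
        simp [htx htA]
      · rw [LinearIsometryEquiv.map_smul]
        filter_upwards [Lp.coeFn_smul r (𝓕 x), hx2] with ω hω hωx hωB
        rw [hω]
        simp [hωx hωB]
  have hvmem : ∀ i, (∀ᵐ x ∂volume, x ∉ A' → vv i x = 0)
      ∧ (∀ᵐ ω ∂volume, ω ∉ B → (𝓕 (vv i)) ω = 0) :=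
    fun i => hWsupp _ (Submodule.coe_mem (ob i))
  have hfinal := rq_step1 h𝓕 hA'm hB hA'fin hBfin hvon
    (fun i => (hvmem i).1) (fun i => (hvmem i).2)
  rw [hrank] at hfinal
  have hA'r : (volume A').toReal ≤ (volume A).toReal + 1 := by
    have h1 := ENNReal.toReal_mono (ENNReal.add_ne_top.mpr ⟨hAfin, ENNReal.one_ne_top⟩) hA'le
    rwa [ENNReal.toReal_add hAfin ENNReal.one_ne_top, ENNReal.toReal_one] at h1
  have hBr : (0:ℝ) ≤ (volume B).toReal := ENNReal.toReal_nonneg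
  have hchain : ((n+1 : ℕ) : ℝ) ≤ ((volume A).toReal + 1) * (volume B).toReal :=
    le_trans hfinal (mul_le_mul_of_nonneg_right hA'r hBr)
  push_cast at hchain
  linarith

end RQAux

/-- **Benedicks's uncertainty principle for the quadratic Rihaczek
distribution.** If `R(f,f)(x,ω) = e^{−2πi x·ω} f(x) conj(𝓕f(ω))` is supported on a set of
finite measure, then `f = 0` a.e. Here `𝓕` is the Fourier–Plancherel transform on `L²(ℝ^d)`,
characterized as the unitary operator extending the Fourier integral on `L¹ ∩ L²`. -/
theorem rihaczek_quadratic_benedicks (d : ℕ) (hd : 1 ≤ d)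
    (f : (Fin d → ℝ) → ℂ) (hf : MemLp f 2 volume)
    (𝓕 : Lp ℂ 2 (volume : Measure (Fin d → ℝ)) ≃ₗᵢ[ℂ]
      Lp ℂ 2 (volume : Measure (Fin d → ℝ)))
    (h𝓕 : ∀ (φ : (Fin d → ℝ) → ℂ),
      Integrable φ volume → ∀ (hφ2 : MemLp φ 2 volume),
      ⇑(𝓕 (hφ2.toLp φ)) =ᵐ[volume] fun ω : Fin d → ℝ =>
        ∫ t : Fin d → ℝ, φ t *
          Complex.exp (-2 * (Real.pi : ℂ) * Complex.I * ((∑ j, t j * ω j : ℝ) : ℂ)))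
    (S : Set ((Fin d → ℝ) × (Fin d → ℝ))) (hSm : MeasurableSet S) (hSfin : volume S < ⊤)
    (hsupp : ∀ᵐ p : (Fin d → ℝ) × (Fin d → ℝ) ∂volume, p ∉ S →
      Complex.exp (-2 * (Real.pi : ℂ) * Complex.I * ((∑ j, p.1 j * p.2 j : ℝ) : ℂ)) *
        f p.1 * conj (⇑(𝓕 (hf.toLp f)) p.2) = 0) :
    f =ᵐ[volume] 0 := by
  classical
  have hfg : ⇑(hf.toLp f) =ᵐ[volume] f := MemLp.coeFn_toLp hf
  set g : Lp ℂ 2 (volume : Measure (Fin d → ℝ)) := hf.toLp f with hgdef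
  have hfm := hf.aestronglyMeasurable
  set f' := hfm.mk f with hf'def
  have hff' : f =ᵐ[volume] f' := hfm.ae_eq_mk
  have hf'meas : StronglyMeasurable f' := hfm.stronglyMeasurable_mk
  have hFm := Lp.aestronglyMeasurable (𝓕 g)
  set F' := hFm.mk (⇑(𝓕 g)) with hF'def
  have hFF' : ⇑(𝓕 g) =ᵐ[volume] F' := hFm.ae_eq_mk
  have hF'meas : StronglyMeasurable F' := hFm.stronglyMeasurable_mk
  set A : Set (Fin d → ℝ) := {x | f' x ≠ 0} with hAdef
  set B : Set (Fin d → ℝ) := {ω | F' ω ≠ 0} with hBdef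
  have hAm : MeasurableSet A := hf'meas.measurable (measurableSet_singleton (0:ℂ)).compl
  have hBm : MeasurableSet B := hF'meas.measurable (measurableSet_singleton (0:ℂ)).compl
  have hfst : ∀ᵐ p : (Fin d → ℝ) × (Fin d → ℝ) ∂volume, f p.1 = f' p.1 := by
    obtain ⟨N1, hN1sub, hN1m, hN1⟩ := exists_measurable_superset_of_null (ae_iff.mp hff')
    rw [ae_iff]
    have hnull : volume (N1 ×ˢ (Set.univ : Set (Fin d → ℝ))) = 0 := by
      rw [Measure.volume_eq_prod, Measure.prod_prod, hN1, zero_mul]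
    exact measure_mono_null
      (fun p hp => Set.mem_prod.mpr ⟨hN1sub hp, Set.mem_univ _⟩) hnull
  have hsnd : ∀ᵐ p : (Fin d → ℝ) × (Fin d → ℝ) ∂volume, (𝓕 g) p.2 = F' p.2 := by
    obtain ⟨N2, hN2sub, hN2m, hN2⟩ := exists_measurable_superset_of_null (ae_iff.mp hFF')
    rw [ae_iff]
    have hnull : volume ((Set.univ : Set (Fin d → ℝ)) ×ˢ N2) = 0 := by
      rw [Measure.volume_eq_prod, Measure.prod_prod, hN2, mul_zero]
    exact measure_mono_null
      (fun p hp => Set.mem_prod.mpr ⟨Set.mem_univ _, hN2sub hp⟩) hnull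
  have hae1 : ∀ᵐ p : (Fin d → ℝ) × (Fin d → ℝ) ∂volume, p ∈ (A ×ˢ B) → p ∈ S := by
    filter_upwards [hsupp, hfst, hsnd] with p hp h1 h2 hmem
    by_contra hpS
    have h3 := hp hpS
    rcases Set.mem_prod.mp hmem with ⟨hpa, hpb⟩
    rcases mul_eq_zero.mp h3 with h4 | h4
    · rcases mul_eq_zero.mp h4 with h5 | h5
      · exact Complex.exp_ne_zero _ h5
      · exact hpa (by rw [← h1]; exact h5)
    · apply hpb
      have h5 : (⇑(𝓕 g)) p.2 = 0 := star_eq_zero.mp h4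
      rw [← h2]
      exact h5
  have hABnull : volume ((A ×ˢ B) \ S) = 0 := by
    refine measure_mono_null ?_ (ae_iff.mp hae1)
    rintro p ⟨h1, h2⟩
    exact fun h => h2 (h h1)
  have hABfin : volume A * volume B < ⊤ := by
    have h1 : volume (A ×ˢ B) ≤ volume S := by
      calc volume (A ×ˢ B) ≤ volume (S ∪ ((A ×ˢ B) \ S)) := measure_mono (fun p hp => by
            by_cases hpS : p ∈ S
            · exact Or.inl hpS
            · exact Or.inr ⟨hp, hpS⟩)
        _ ≤ volume S + volume ((A ×ˢ B) \ S) := measure_union_le _ _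
        _ = volume S := by rw [hABnull, add_zero]
    calc volume A * volume B = volume (A ×ˢ B) := by
          rw [← Measure.prod_prod, ← Measure.volume_eq_prod]
      _ ≤ volume S := h1
      _ < ⊤ := hSfin
  by_cases hA0 : volume A = 0
  · have h1 : ∀ᵐ x ∂volume, f' x = 0 := by
      rw [ae_iff]
      exact hA0
    filter_upwards [hff', h1] with x h2 h3
    rw [h2, h3]
    rfl
  by_cases hB0 : volume B = 0
  · have h1 : ∀ᵐ ω ∂volume, F' ω = 0 := by
      rw [ae_iff]
      exact hB0
    have hF0 : ⇑(𝓕 g) =ᵐ[volume] 0 := by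
      filter_upwards [hFF', h1] with ω h2 h3
      rw [h2, h3]
      rfl
    have hg0 : g = 0 :=
      (LinearIsometryEquiv.map_eq_zero_iff 𝓕).mp ((Lp.eq_zero_iff_ae_eq_zero).mpr hF0)
    have h2 : ⇑g =ᵐ[volume] 0 := by
      rw [hg0]
      exact Lp.coeFn_zero ℂ 2 (volume : Measure (Fin d → ℝ))
    exact hfg.symm.trans h2
  exfalso
  have hAfin : volume A ≠ ⊤ := by
    intro h
    rw [h, ENNReal.top_mul hB0] at hABfin
    exact lt_irrefl _ hABfin
  have hBfin : volume B ≠ ⊤ := by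
    intro h
    rw [h, ENNReal.mul_top hA0] at hABfin
    exact lt_irrefl _ hABfin
  have hg_ne : g ≠ 0 := by
    intro h
    apply hA0
    have h1 : ⇑g =ᵐ[volume] 0 := by
      rw [h]
      exact Lp.coeFn_zero ℂ 2 (volume : Measure (Fin d → ℝ))
    have h2 : ∀ᵐ x ∂volume, f' x = 0 := by
      filter_upwards [hff', hfg, h1] with x e1 e2 e3
      rw [← e1, ← e2]
      exact e3
    exact ae_iff.mp h2
  have hsuppA : ∀ᵐ x ∂volume, x ∉ A → g x = 0 := by
    filter_upwards [hfg, hff'] with x h1 h2 hxA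
    rw [h1, h2]
    exact not_not.mp hxA
  have hsuppB : ∀ᵐ ω ∂volume, ω ∉ B → 𝓕 g ω = 0 := by
    filter_upwards [hFF'] with ω h1 hωB
    rw [h1]
    exact not_not.mp hωB
  exact rq_AB hd h𝓕 hg_ne hAm hBm hAfin hBfin hsuppA hsuppB
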